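/- Let m = 4a+3 with a ≥ 0. In the polynomial relation Σ_{0 ≤ i ≤ m/2} C(m−i, i) x₁^{m−2i} x₂^i = 0 over 𝔽₂, every binomial coefficient C(m−i, i) with i ≢ 0 (mod 4) is even; consequently the relation is equivalent to x₁^{4a+3} = Σ_{j=1}^{⌊a/2⌋} C(a−j, j) x₁^{4(a−2j)+3} x₂^{4j} in 𝔽₂[x₁, x₂]. -/

import Mathlib

open MvPolynomial Finset

private lemma lucas4 (n k s t : ℕ) (hs : s < 4) (ht : t < 4) :
    Nat.choose (4 * n + s) (4 * k + t) % 2 = (Nat.choose n k * Nat.choose s t) % 2 := by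
  haveI : Fact (Nat.Prime 2) := ⟨Nat.prime_two⟩
  have h1 := Choose.choose_modEq_choose_mod_mul_choose_div_nat (p := 2)
    (n := 4 * n + s) (k := 4 * k + t)
  have h2 := Choose.choose_modEq_choose_mod_mul_choose_div_nat (p := 2)
    (n := 2 * n + s / 2) (k := 2 * k + t / 2)
  have h3 := Choose.choose_modEq_choose_mod_mul_choose_div_nat (p := 2) (n := s) (k := t)
  have e1 : (4 * n + s) / 2 = 2 * n + s / 2 := by omega
  have e2 : (4 * k + t) / 2 = 2 * k + t / 2 := by omega
  have e3 : (4 * n + s) % 2 = s % 2 := by omega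
  have e4 : (4 * k + t) % 2 = t % 2 := by omega
  have e5 : (2 * n + s / 2) % 2 = s / 2 % 2 := by omega
  have e6 : (2 * k + t / 2) % 2 = t / 2 % 2 := by omega
  have e9 : s / 2 % 2 = s / 2 := by omega
  have e10 : t / 2 % 2 = t / 2 := by omega
  have e7 : (2 * n + s / 2) / 2 = n := by omega
  have e8 : (2 * k + t / 2) / 2 = k := by omega
  rw [e1, e2, e3, e4] at h1
  rw [e5, e6, e9, e10, e7, e8] at h2
  have key : Nat.choose (4 * n + s) (4 * k + t) ≡
      (Nat.choose n k * Nat.choose s t) [MOD 2] := by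
    calc Nat.choose (4 * n + s) (4 * k + t)
        ≡ Nat.choose (s % 2) (t % 2) * Nat.choose (2 * n + s / 2) (2 * k + t / 2) [MOD 2] := h1
      _ ≡ Nat.choose (s % 2) (t % 2) * (Nat.choose (s / 2) (t / 2) * Nat.choose n k)
          [MOD 2] := Nat.ModEq.mul_left _ h2
      _ = Nat.choose n k * (Nat.choose (s % 2) (t % 2) * Nat.choose (s / 2) (t / 2)) := by
          ring
      _ ≡ Nat.choose n k * Nat.choose s t [MOD 2] := Nat.ModEq.mul_left _ h3.symm
  exact key

theorem stmt5 (a : ℕ) (m : ℕ) (hm : m = 4 * a + 3) :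
    (∀ i : ℕ, i ≤ m / 2 → i % 4 ≠ 0 → 2 ∣ Nat.choose (m - i) i) ∧
    (∀ j : ℕ, 4 * j ≤ m / 2 →
      Nat.choose (m - 4 * j) (4 * j) % 2 = Nat.choose (a - j) j % 2) ∧
    (∑ i ∈ Finset.range (m / 2 + 1),
        (C ((Nat.choose (m - i) i : ℕ) : ZMod 2)) * (X 0) ^ (m - 2 * i) * (X 1) ^ i
      = (X 0 : MvPolynomial (Fin 2) (ZMod 2)) ^ (4 * a + 3)
        + ∑ j ∈ Finset.Icc 1 (a / 2),
            (C ((Nat.choose (a - j) j : ℕ) : ZMod 2))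
              * (X 0) ^ (4 * (a - 2 * j) + 3) * (X 1) ^ (4 * j)) := by
  subst hm
  have hm2 : (4 * a + 3) / 2 = 2 * a + 1 := by omega
  have part1 : ∀ i : ℕ, i ≤ (4 * a + 3) / 2 → i % 4 ≠ 0 →
      2 ∣ Nat.choose (4 * a + 3 - i) i := by
    intro i hi hr
    rw [hm2] at hi
    set q := i / 4 with hq
    set r := i % 4 with hrr
    have hiq : i = 4 * q + r := by omega
    have hqa : q ≤ a := by omega
    have hr4 : r < 4 := by omega
    have hsub : 4 * a + 3 - i = 4 * (a - q) + (3 - r) := by omega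
    have := lucas4 (a - q) q (3 - r) r (by omega) hr4
    rw [Nat.dvd_iff_mod_eq_zero]
    rw [hsub, hiq, this]
    interval_cases r
    · omega
    · simp [Nat.mul_mod]
    · simp [Nat.choose_eq_zero_of_lt]
    · simp [Nat.choose_eq_zero_of_lt]
  have part2 : ∀ j : ℕ, 4 * j ≤ (4 * a + 3) / 2 →
      Nat.choose (4 * a + 3 - 4 * j) (4 * j) % 2 = Nat.choose (a - j) j % 2 := by
    intro j hj
    rw [hm2] at hj
    have hsub : 4 * a + 3 - 4 * j = 4 * (a - j) + 3 := by omega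
    have h4j : 4 * j = 4 * j + 0 := by omega
    rw [hsub, h4j, lucas4 (a - j) j 3 0 (by omega) (by omega)]
    simp
  refine ⟨part1, part2, ?_⟩
  have hsum : ∑ i ∈ Finset.range ((4 * a + 3) / 2 + 1),
        (C ((Nat.choose (4 * a + 3 - i) i : ℕ) : ZMod 2)) * (X 0 : MvPolynomial (Fin 2) (ZMod 2)) ^ (4 * a + 3 - 2 * i) * (X 1) ^ i
      = ∑ j ∈ Finset.range (a / 2 + 1),
        (C ((Nat.choose (4 * a + 3 - 4 * j) (4 * j) : ℕ) : ZMod 2)) * (X 0) ^ (4 * a + 3 - 2 * (4 * j)) * (X 1) ^ (4 * j) := by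
    rw [← Finset.sum_image (g := fun j => 4 * j)
      (f := fun i => (C ((Nat.choose (4 * a + 3 - i) i : ℕ) : ZMod 2)) * (X 0 : MvPolynomial (Fin 2) (ZMod 2)) ^ (4 * a + 3 - 2 * i) * (X 1) ^ i)
      (by intro x _ y _ h; simp only [] at h; omega)]
    refine (Finset.sum_subset ?_ ?_).symm
    · intro i hi
      simp only [Finset.mem_image, Finset.mem_range] at hi ⊢
      obtain ⟨j, hj, rfl⟩ := hi
      omega
    · intro i hi hni
      simp only [Finset.mem_image, Finset.mem_range] at hi hni
      have hmod : i % 4 ≠ 0 := by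
        intro h
        exact hni ⟨i / 4, by omega, by omega⟩
      have := part1 i (by omega) hmod
      have hz : ((Nat.choose (4 * a + 3 - i) i : ℕ) : ZMod 2) = 0 :=
        (ZMod.natCast_eq_zero_iff _ 2).mpr this
      rw [hz, map_zero, zero_mul, zero_mul]
  rw [hsum]
  rw [← Finset.add_sum_erase _ _ (Finset.mem_range.mpr (Nat.succ_pos _))]
  have herase : (Finset.range (a / 2 + 1)).erase 0 = Finset.Icc 1 (a / 2) := by
    ext x
    simp only [Finset.mem_erase, Finset.mem_range, Finset.mem_Icc]
    omega
  rw [herase]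
  congr 1
  · simp
  · refine Finset.sum_congr rfl ?_
    intro j hj
    simp only [Finset.mem_Icc] at hj
    have hcast : ((Nat.choose (4 * a + 3 - 4 * j) (4 * j) : ℕ) : ZMod 2)
        = ((Nat.choose (a - j) j : ℕ) : ZMod 2) := by
      rw [ZMod.natCast_eq_natCast_iff]
      exact part2 j (by omega)
    rw [hcast]
    have : 4 * a + 3 - 2 * (4 * j) = 4 * (a - 2 * j) + 3 := by omega
    rw [this]
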